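/- Let A = [[0,1,0],[1,0,0],[0,0,0]] and Φ the Oseen tensor. Then for x ≠ 0, curl(∇Φ(x):A) = −(3/(4π))·(Ax ∧ x)/|x|⁵, where (∇Φ(x):A)_i = ∂_k Φ_{ji}(x) A_{jk}. -/

import Mathlib

open MeasureTheory Real
open scoped BigOperators

noncomputable section

abbrev E3 := EuclideanSpace ℝ (Fin 3)

def pd (k : Fin 3) (f : E3 → ℝ) (x : E3) : ℝ :=
  fderiv ℝ f x (EuclideanSpace.single k 1)

/-- The Oseen tensor. -/
def Phi (x : E3) : Matrix (Fin 3) (Fin 3) ℝ :=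
  (1 / (8 * π)) • (‖x‖⁻¹ • (1 : Matrix (Fin 3) (Fin 3) ℝ)
    + (‖x‖ ^ 3)⁻¹ • Matrix.vecMulVec (fun i => x i) (fun i => x i))

/-- The vector field `x ↦ ∇Φ(x):A`, with `(∇Φ(x):A)_i = ∂_k Φ_{ji}(x) A_{jk}`. -/
def gradPhiA (A : Matrix (Fin 3) (Fin 3) ℝ) (x : E3) : Fin 3 → ℝ :=
  fun i => ∑ j : Fin 3, ∑ k : Fin 3, pd k (fun y => Phi y j i) x * A j k

/-- Cross product in ℝ³. -/
def cross (a b : Fin 3 → ℝ) : Fin 3 → ℝ :=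
  ![a 1 * b 2 - a 2 * b 1, a 2 * b 0 - a 0 * b 2, a 0 * b 1 - a 1 * b 0]

/-- Curl of a vector field on ℝ³. -/
def curl3 (u : E3 → Fin 3 → ℝ) (x : E3) : Fin 3 → ℝ :=
  ![pd 1 (fun y => u y 2) x - pd 2 (fun y => u y 1) x,
    pd 2 (fun y => u y 0) x - pd 0 (fun y => u y 2) x,
    pd 0 (fun y => u y 1) x - pd 1 (fun y => u y 0) x]

lemma hasFDerivAt_norm' (x : E3) (hx : x ≠ 0) :
    HasFDerivAt (fun y : E3 => ‖y‖) (‖x‖⁻¹ • innerSL ℝ x) x := by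
  have h2 : HasFDerivAt (fun y : E3 => ‖y‖ ^ 2) (2 • (innerSL ℝ x)) x :=
    (hasStrictFDerivAt_norm_sq x).hasFDerivAt
  have hs : (‖x‖ ^ 2 : ℝ) ≠ 0 := pow_ne_zero _ (norm_ne_zero_iff.2 hx)
  have h := (Real.hasDerivAt_sqrt hs).comp_hasFDerivAt x h2
  have hgoal : ((fun t => Real.sqrt t) ∘ fun y : E3 => ‖y‖ ^ 2) = fun y : E3 => ‖y‖ := by
    funext y; simp [Function.comp, Real.sqrt_sq (norm_nonneg y)]
  rw [hgoal] at h
  refine h.congr_fderiv ?_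
  symm
  rw [Real.sqrt_sq (norm_nonneg x)]
  ext v
  simp [smul_smul]
  have : ‖x‖ ≠ 0 := norm_ne_zero_iff.2 hx
  field_simp

lemma hasFDerivAt_normpow_inv (x : E3) (hx : x ≠ 0) (m : ℕ) :
    HasFDerivAt (fun y : E3 => (‖y‖ ^ (m+1))⁻¹)
      ((-((m:ℝ)+1) * (‖x‖ ^ (m+3))⁻¹) • innerSL ℝ x) x := by
  have hn : ‖x‖ ≠ 0 := norm_ne_zero_iff.2 hx
  have hp : (‖x‖ ^ (m+1) : ℝ) ≠ 0 := pow_ne_zero _ hn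
  have hd : HasDerivAt (fun t : ℝ => (t ^ (m+1))⁻¹)
      (-(((m:ℝ)+1) * ‖x‖ ^ m) / (‖x‖ ^ (m+1)) ^ 2) ‖x‖ := by
    simpa [Pi.inv_def] using (hasDerivAt_pow (m+1) ‖x‖).inv hp
  have h := hd.comp_hasFDerivAt x (hasFDerivAt_norm' x hx)
  refine h.congr_fderiv ?_
  symm
  ext v
  simp only [ContinuousLinearMap.coe_smul', Pi.smul_apply, smul_eq_mul, smul_smul]
  congr 1
  field_simp
  ring

lemma hasFDerivAt_coord (x : E3) (j : Fin 3) :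
    HasFDerivAt (fun y : E3 => y j) (EuclideanSpace.proj (𝕜 := ℝ) j) x := by
  exact (EuclideanSpace.proj (𝕜 := ℝ) j).hasFDerivAt

lemma pd_Phi (x : E3) (hx : x ≠ 0) (i j k : Fin 3) :
    pd k (fun y => Phi y j i) x =
      (1/(8*π)) * ( -(if j = i then (1:ℝ) else 0) * x k * (‖x‖^3)⁻¹
        + ((if j = k then (1:ℝ) else 0) * x i + (if i = k then (1:ℝ) else 0) * x j) * (‖x‖^3)⁻¹
        - 3 * x j * x i * x k * (‖x‖^5)⁻¹ ) := by
  have hfun : (fun y => Phi y j i)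
      = fun y : E3 => (1/(8*π)) * ((‖y‖ ^ (0+1))⁻¹ * (if j = i then (1:ℝ) else 0)
          + (‖y‖ ^ (2+1))⁻¹ * (y j * y i)) := by
    funext y
    simp [Phi, Matrix.add_apply, Matrix.smul_apply, Matrix.one_apply, Matrix.vecMulVec_apply,
      smul_eq_mul]
    try ring
  have h1 := hasFDerivAt_normpow_inv x hx 0
  have h3 := hasFDerivAt_normpow_inv x hx 2
  have H := ((h1.mul_const (if j = i then (1:ℝ) else 0)).add
    (h3.mul ((hasFDerivAt_coord x j).mul (hasFDerivAt_coord x i)))).const_mul (1/(8*π))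
  simp only [Pi.mul_def, Pi.add_def] at H
  rw [pd, hfun, H.fderiv]
  simp [EuclideanSpace.inner_single_right, EuclideanSpace.single_apply, smul_smul,
    real_inner_comm]
  split_ifs <;> norm_num [EuclideanSpace.inner_single_right] <;> ring_nf

lemma gradPhiA_eq (x : E3) (hx : x ≠ 0) :
    gradPhiA !![0,1,0;1,0,0;0,0,0] x
      = fun i => -(3/(4*π)) * (x 0 * x 1 * x i) * (‖x‖^5)⁻¹ := by
  funext i
  fin_cases i <;>
    simp [gradPhiA, Fin.sum_univ_three, pd_Phi x hx, Matrix.vecHead, Matrix.vecTail] <;> ring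

lemma pd_F (x : E3) (hx : x ≠ 0) (c : ℝ) (i k : Fin 3) :
    pd k (fun y => c * (y 0 * y 1 * y i) * (‖y‖^5)⁻¹) x =
      c * ( ((if (0:Fin 3) = k then (1:ℝ) else 0) * x 1 * x i
            + (if (1:Fin 3) = k then (1:ℝ) else 0) * x 0 * x i
            + (if i = k then (1:ℝ) else 0) * x 0 * x 1) * (‖x‖^5)⁻¹
          - 5 * x 0 * x 1 * x i * x k * (‖x‖^7)⁻¹ ) := by
  have hfun : (fun y : E3 => c * (y 0 * y 1 * y i) * (‖y‖^5)⁻¹)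
      = fun y : E3 => c * ((y 0 * y 1 * y i) * (‖y‖ ^ (4+1))⁻¹) := by
    funext y; norm_num; ring
  have H := ((((hasFDerivAt_coord x 0).mul (hasFDerivAt_coord x 1)).mul
      (hasFDerivAt_coord x i)).mul (hasFDerivAt_normpow_inv x hx 4)).const_mul c
  simp only [Pi.mul_def, Pi.add_def] at H
  rw [pd, hfun, H.fderiv]
  simp [EuclideanSpace.inner_single_right, EuclideanSpace.single_apply, smul_smul,
    real_inner_comm]
  split_ifs <;> norm_num <;> ring_nf

lemma pd_congr (k : Fin 3) {f g : E3 → ℝ} {x : E3} (h : f =ᶠ[nhds x] g) :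
    pd k f x = pd k g x := by
  unfold pd; rw [h.fderiv_eq]

lemma grad_ev (x : E3) (hx : x ≠ 0) (i : Fin 3) :
    (fun y => gradPhiA !![0,1,0;1,0,0;0,0,0] y i)
      =ᶠ[nhds x] fun y => -(3/(4*π)) * (y 0 * y 1 * y i) * (‖y‖^5)⁻¹ := by
  filter_upwards [eventually_ne_nhds hx] with y hy
  exact congrFun (gradPhiA_eq y hy) i

/-- for `A = [[0,1,0],[1,0,0],[0,0,0]]`,
`curl(∇Φ(x):A) = −(3/(4π)) (Ax ∧ x)/|x|⁵`. -/
theorem stmt1 (x : E3) (hx : x ≠ 0) :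
    curl3 (gradPhiA !![0,1,0;1,0,0;0,0,0]) x
      = (-(3 / (4 * π)) / ‖x‖ ^ 5) •
          cross ((!![0,1,0;1,0,0;0,0,0] : Matrix (Fin 3) (Fin 3) ℝ).mulVec fun i => x i)
            (fun i => x i) := by
  have hn : ‖x‖ ≠ 0 := norm_ne_zero_iff.2 hx
  funext idx
  fin_cases idx <;>
  · simp only [curl3, pd_congr _ (grad_ev x hx 0), pd_congr _ (grad_ev x hx 1),
      pd_congr _ (grad_ev x hx 2), pd_F x hx, cross, Matrix.mulVec, Matrix.cons_val_zero,
      Matrix.cons_val_one, Matrix.head_cons, Pi.smul_apply, smul_eq_mul]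
    norm_num [Fin.reduceEq, Matrix.vecHead, Matrix.vecTail, dotProduct, Fin.sum_univ_three, Matrix.cons_val]
    try simp only [Fin.isValue, Fin.reduceEq, reduceIte]
    simp only [Matrix.cons_val_two, Matrix.tail_cons, Matrix.head_cons, Matrix.cons_val_zero,
      Matrix.cons_val_one, Matrix.vecHead]
    field_simp
    ring
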